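/- Let R be a commutative Noetherian ring, a an ideal of R, M an R-module, and let E be the injective hull of the R-module M/Γ_a(M). Then the a-torsion submodule Γ_a(E) is zero and Hom_R(R/a, E) = 0. -/
import Mathlib

open CategoryTheory

universe u

/-- The `a`-torsion submodule `Γ_a(M)`: elements annihilated by some power of `a`. -/
def gammaTorsion (R : Type u) [CommRing R] (a : Ideal R) (M : Type u) [AddCommGroup M]
    [Module R M] : Submodule R M :=
  ⨆ n : ℕ, Submodule.torsionBySet R M ((a ^ n : Ideal R) : Set R)

lemma mem_gammaTorsion_iff {R : Type u} [CommRing R] {a : Ideal R} {M : Type u} [AddCommGroup M]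
    [Module R M] {x : M} :
    x ∈ gammaTorsion R a M ↔ ∃ n : ℕ, ∀ c ∈ a ^ n, c • x = 0 := by
  have hmono : Monotone fun n : ℕ => Submodule.torsionBySet R M ((a ^ n : Ideal R) : Set R) := by
    intro m n hmn
    exact Submodule.torsionBySet_le_torsionBySet_of_subset (Ideal.pow_le_pow_right hmn)
  rw [gammaTorsion, Submodule.mem_iSup_of_directed _ hmono.directed_le]
  simp [Submodule.mem_torsionBySet_iff, Subtype.forall]

lemma gammaTorsion_quotient_eq_bot (R : Type u) [CommRing R] [IsNoetherianRing R]
    (a : Ideal R) (M : Type u) [AddCommGroup M] [Module R M] :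
    gammaTorsion R a (M ⧸ gammaTorsion R a M) = ⊥ := by
  rw [eq_bot_iff]
  intro x hx
  obtain ⟨n, hn⟩ := mem_gammaTorsion_iff.mp hx
  obtain ⟨y, rfl⟩ := Submodule.Quotient.mk_surjective _ x
  -- a^n is finitely generated
  obtain ⟨s, hs⟩ : (a ^ n).FG := IsNoetherian.noetherian _
  -- for each generator c, c • y ∈ gammaTorsion, pick exponents
  have hc : ∀ c ∈ s, (c : R) • Submodule.Quotient.mk (p := gammaTorsion R a M) y = 0 := by
    intro c hc
    exact hn c (hs ▸ Ideal.subset_span hc)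
  have hmem : ∀ c ∈ s, ∃ m : ℕ, ∀ d ∈ a ^ m, d • (c • y) = 0 := by
    intro c hcs
    have := hc c hcs
    rw [← Submodule.Quotient.mk_smul, Submodule.Quotient.mk_eq_zero] at this
    exact mem_gammaTorsion_iff.mp this
  choose! m hm using hmem
  -- take max
  obtain ⟨N, hN⟩ : ∃ N : ℕ, ∀ c ∈ s, m c ≤ N := ⟨s.sup m, fun c hcs => Finset.le_sup hcs⟩
  -- show y ∈ torsionBySet a^(N+n), i.e. in gammaTorsion
  simp only [Submodule.mem_bot, Submodule.Quotient.mk_eq_zero]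
  refine mem_gammaTorsion_iff.mpr ⟨N + n, fun d hd => ?_⟩
  -- d ∈ a^N * a^n; reduce via induction on membership in product
  rw [pow_add] at hd
  refine Submodule.smul_induction_on hd (fun r hr t ht => ?_) (fun u v hu hv => ?_)
  · -- t ∈ a^n = span s
    rw [← hs] at ht
    have key : ∀ t ∈ Ideal.span (s : Set R), (r * t) • y = 0 := by
      intro t ht
      refine Submodule.span_induction (fun c hcs => ?_) (by simp) (fun u v _ _ hu hv => ?_)
        (fun q u _ hu => ?_) ht
      · rw [mul_smul]
        refine hm c hcs r (Ideal.pow_le_pow_right (hN c hcs) hr)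
      · rw [mul_add, add_smul, hu, hv, add_zero]
      · rw [show r * (q • u) = q * (r * u) by simp [smul_eq_mul]; ring, mul_smul, hu, smul_zero]
    exact key t ht
  · rw [add_smul, hu, hv, add_zero]

/-- If `E` is an injective hull of `M/Γ_a(M)` (i.e. `E` is injective and `M/Γ_a(M)` embeds in
`E` as an essential submodule), then `Γ_a(E) = 0` and `Hom_R(R/a, E) = 0`. -/
theorem gammaTorsion_injectiveHull_eq_bot (R : Type u) [CommRing R] [IsNoetherianRing R]
    (a : Ideal R) (M : Type u) [AddCommGroup M] [Module R M]
    (E : Type u) [AddCommGroup E] [Module R E] (hE : Module.Injective R E)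
    (ι : (M ⧸ gammaTorsion R a M) →ₗ[R] E) (hinj : Function.Injective ι)
    (hess : ∀ N : Submodule R E, N ≠ ⊥ → LinearMap.range ι ⊓ N ≠ ⊥) :
    gammaTorsion R a E = ⊥ ∧ ∀ f : (R ⧸ a) →ₗ[R] E, f = 0 := by
  have hbot : gammaTorsion R a E = ⊥ := by
    by_contra h
    obtain ⟨z, hz, hz0⟩ := Submodule.exists_mem_ne_zero_of_ne_bot (hess _ h)
    obtain ⟨⟨x, rfl⟩, hzt⟩ := hz
    obtain ⟨n, hn⟩ := mem_gammaTorsion_iff.mp hzt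
    have hx : x ∈ gammaTorsion R a (M ⧸ gammaTorsion R a M) := by
      refine mem_gammaTorsion_iff.mpr ⟨n, fun c hc => ?_⟩
      apply hinj
      rw [map_smul, map_zero]
      exact hn c hc
    rw [gammaTorsion_quotient_eq_bot, Submodule.mem_bot] at hx
    exact hz0 (by rw [hx, map_zero])
  refine ⟨hbot, fun f => ?_⟩
  have key : f 1 = 0 := by
    have : f 1 ∈ gammaTorsion R a E := by
      refine mem_gammaTorsion_iff.mpr ⟨1, fun c hc => ?_⟩
      rw [pow_one] at hc
      rw [← map_smul]
      have : (c : R) • (1 : R ⧸ a) = 0 := by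
        have h1 : (1 : R ⧸ a) = Submodule.Quotient.mk 1 := rfl
        rw [h1, ← Submodule.Quotient.mk_smul, Submodule.Quotient.mk_eq_zero]
        simpa using hc
      rw [this, map_zero]
    rwa [hbot, Submodule.mem_bot] at this
  apply LinearMap.ext
  intro x
  obtain ⟨r, rfl⟩ := Submodule.Quotient.mk_surjective _ x
  have : (Submodule.Quotient.mk r : R ⧸ a) = r • 1 := by
    show _ = r • Submodule.Quotient.mk (1 : R)
    rw [← Submodule.Quotient.mk_smul, smul_eq_mul, mul_one]
  rw [this, map_smul, key, smul_zero, LinearMap.zero_apply]
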